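/- Let n ≥ 2 be an integer and κ > 0. Let (X, d, μ) be a metric measure space satisfying the upper volume bound μ(B(x, r)) ≤ κ⁻¹ rⁿ for all x ∈ X and all r > 0. Then there exists a constant C₁ > 0, depending only on n and κ, such that for every integrable function f : X → [0, ∞) and every x ∈ X with Mf(x) < ∞, the Riesz potential satisfies I₁f(x) = ∫_X f(y) / d(x, y)^{n−1} dμ(y) ≤ C₁ · (Mf(x))^{(n−1)/n} · ‖f‖₁^{1/n}. -/

import Mathlib

open MeasureTheory Metric ENNReal

/-- The Riesz potential of order 1 on an `n`-dimensional metric measure space: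
`I₁ f (x) = ∫_X f(y) / d(x,y)^{n-1} dμ(y)`. -/
noncomputable def rieszPotential {X : Type*} [MetricSpace X] [MeasurableSpace X]
    (μ : Measure X) (n : ℕ) (f : X → ℝ) (x : X) : ℝ≥0∞ :=
  ∫⁻ y, ENNReal.ofReal (f y) / edist x y ^ (n - 1) ∂μ

/-- The centered Hardy–Littlewood maximal function
`M f (x) = sup_{r > 0} μ(B(x,r))⁻¹ ∫_{B(x,r)} f dμ`. -/
noncomputable def maximalFn {X : Type*} [MetricSpace X] [MeasurableSpace X]
    (μ : Measure X) (f : X → ℝ) (x : X) : ℝ≥0∞ :=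
  ⨆ (r : ℝ) (_ : 0 < r), (μ (ball x r))⁻¹ * ∫⁻ y in ball x r, ENNReal.ofReal (f y) ∂μ

open Filter

lemma ball_lintegral_le {X : Type*} [MetricSpace X] [MeasurableSpace X]
    (μ : Measure X) (f : X → ℝ) (x : X) {r : ℝ} (hr : 0 < r)
    (hfin : μ (ball x r) ≠ ⊤) :
    ∫⁻ y in ball x r, ENNReal.ofReal (f y) ∂μ ≤ maximalFn μ f x * μ (ball x r) := by
  by_cases h0 : μ (ball x r) = 0
  · rw [setLIntegral_measure_zero _ _ h0]; exact zero_le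
  · have hle : (μ (ball x r))⁻¹ * ∫⁻ y in ball x r, ENNReal.ofReal (f y) ∂μ ≤ maximalFn μ f x :=
      le_iSup₂ (f := fun (r : ℝ) (_ : 0 < r) =>
        (μ (ball x r))⁻¹ * ∫⁻ y in ball x r, ENNReal.ofReal (f y) ∂μ) r hr
    calc ∫⁻ y in ball x r, ENNReal.ofReal (f y) ∂μ
        = ((μ (ball x r))⁻¹ * ∫⁻ y in ball x r, ENNReal.ofReal (f y) ∂μ) * μ (ball x r) := by
          rw [mul_comm, ← mul_assoc, ENNReal.mul_inv_cancel h0 hfin, one_mul]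
      _ ≤ maximalFn μ f x * μ (ball x r) := mul_le_mul_left hle _

lemma singleton_null {X : Type*} [MetricSpace X] [MeasurableSpace X]
    (μ : Measure X) (n : ℕ) (hn : 1 ≤ n) (κ : ℝ)
    (x : X) (hvol : ∀ r : ℝ, 0 < r → μ (ball x r) ≤ ENNReal.ofReal (κ⁻¹ * r ^ n)) :
    μ {x} = 0 := by
  have hle : ∀ m : ℕ, μ {x} ≤ ENNReal.ofReal (κ⁻¹ * (((m : ℝ) + 1)⁻¹) ^ n) := by
    intro m
    refine le_trans (measure_mono ?_) (hvol _ (by positivity))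
    intro y hy; simp at hy; subst hy; simp [mem_ball]; positivity
  have ht : Tendsto (fun m : ℕ => ENNReal.ofReal (κ⁻¹ * (((m : ℝ) + 1)⁻¹) ^ n)) atTop (nhds 0) := by
    have h1 : Tendsto (fun m : ℕ => ((m : ℝ) + 1)⁻¹) atTop (nhds 0) := by
      simpa using (tendsto_one_div_add_atTop_nhds_zero_nat : Tendsto (fun m : ℕ => 1 / ((m : ℝ) + 1)) atTop (nhds 0))
    have h2 : Tendsto (fun m : ℕ => κ⁻¹ * (((m : ℝ) + 1)⁻¹) ^ n) atTop (nhds (κ⁻¹ * 0 ^ n)) :=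
      (h1.pow n).const_mul _
    rw [zero_pow (by omega), mul_zero] at h2
    simpa using (ENNReal.tendsto_ofReal h2)
  exact le_antisymm (ge_of_tendsto' ht hle) zero_le

lemma near_part {X : Type*} [MetricSpace X] [MeasurableSpace X] [BorelSpace X]
    (μ : Measure X) (n : ℕ) (hn : 2 ≤ n) (κ : ℝ) (hκ : 0 < κ)
    (f : X → ℝ) (x : X)
    (hvol : ∀ r : ℝ, 0 < r → μ (ball x r) ≤ ENNReal.ofReal (κ⁻¹ * r ^ n))
    {R : ℝ} (hR : 0 < R) :
    ∫⁻ y in ball x R, ENNReal.ofReal (f y) / edist x y ^ (n - 1) ∂μ ≤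
      maximalFn μ f x * ENNReal.ofReal (κ⁻¹ * 2 ^ n * R) := by
  set A := maximalFn μ f x with hA
  set g : X → ℝ≥0∞ := fun y => ENNReal.ofReal (f y) / edist x y ^ (n - 1) with hg
  set rr : ℕ → ℝ := fun j => R * (2⁻¹ : ℝ) ^ j with hrr
  have hrpos : ∀ j, 0 < rr j := fun j => by positivity
  have hrsucc : ∀ j, rr (j + 1) = rr j / 2 := fun j => by
    simp only [hrr, pow_succ]; ring
  set S : ℕ → Set X := fun j => ball x (rr j) \ ball x (rr (j + 1)) with hS
  -- the ball minus the center is covered by the annuli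
  have hsub : ball x R \ {x} ⊆ ⋃ j, S j := by
    intro y hy
    obtain ⟨hyb, hyx⟩ := hy
    have hd : 0 < dist x y := by
      rw [dist_pos]; exact fun h => hyx (by simp [h.symm])
    have hdR : dist x y < R := by rw [dist_comm]; exact mem_ball.mp hyb
    obtain ⟨k, hk⟩ := exists_pow_lt_of_lt_one (div_pos hd hR) (by norm_num : (2⁻¹ : ℝ) < 1)
    have hk' : rr k < dist x y := by
      rw [hrr]; simp only []
      calc R * (2⁻¹:ℝ)^k < R * (dist x y / R) := by
            exact (mul_lt_mul_iff_right₀ hR).mpr hk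
        _ = dist x y := by field_simp
    -- least j with dist < rr j fails at k; find least j where ¬(dist x y < rr j) ... use Nat.find
    have hex : ∃ j, ¬ (dist x y < rr j) := ⟨k, not_lt.mpr hk'.le⟩
    classical
    set j0 := Nat.find hex with hj0
    have hj0spec : ¬ (dist x y < rr j0) := Nat.find_spec hex
    have hj0pos : j0 ≠ 0 := by
      intro h
      apply hj0spec
      rw [h]; simpa [hrr, dist_comm] using hdR
    obtain ⟨j, hj⟩ := Nat.exists_eq_succ_of_ne_zero hj0pos
    have hlt : dist x y < rr j := by
      by_contra hc
      exact Nat.find_min hex (by omega : j < j0) hc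
    refine Set.mem_iUnion.mpr ⟨j, ?_⟩
    constructor
    · rw [mem_ball, dist_comm]; exact hlt
    · rw [mem_ball, dist_comm]; rw [hj] at hj0spec; exact hj0spec
  have hnull : μ {x} = 0 := singleton_null μ n (by omega) κ x hvol
  have hcongr : ∫⁻ y in ball x R, g y ∂μ = ∫⁻ y in ball x R \ {x}, g y ∂μ := by
    exact setLIntegral_congr
      ((diff_ae_eq_self.mpr (measure_mono_null Set.inter_subset_right hnull)).symm)
  -- bound each annulus term
  have hterm : ∀ j, ∫⁻ y in S j, g y ∂μ ≤ A * ENNReal.ofReal (κ⁻¹ * 2 ^ (n-1) * R) * ENNReal.ofReal ((2⁻¹:ℝ) ^ j) := by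
    intro j
    set c : ℝ≥0∞ := (ENNReal.ofReal (rr (j+1) ^ (n-1)))⁻¹ with hc
    have hcne : c ≠ ⊤ := by
      rw [hc]; simp [ENNReal.inv_ne_top]
      positivity
    have hmeas : MeasurableSet (S j) := measurableSet_ball.diff measurableSet_ball
    have hpt : ∀ y ∈ S j, g y ≤ c * ENNReal.ofReal (f y) := by
      intro y hy
      have hdy : rr (j+1) ≤ dist x y := by
        have := hy.2
        rw [mem_ball, dist_comm] at this
        exact not_lt.mp this
      have hedist : ENNReal.ofReal (rr (j+1)) ≤ edist x y := by
        rw [edist_dist]; exact ENNReal.ofReal_le_ofReal hdy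
      have hpow : ENNReal.ofReal (rr (j+1) ^ (n-1)) ≤ edist x y ^ (n-1) := by
        rw [ENNReal.ofReal_pow (hrpos _).le]
        exact pow_le_pow_left' hedist _
      rw [hg]; simp only []
      rw [ENNReal.div_eq_inv_mul, hc]
      exact mul_le_mul_left (ENNReal.inv_le_inv.mpr hpow) _
    calc ∫⁻ y in S j, g y ∂μ
        ≤ ∫⁻ y in S j, c * ENNReal.ofReal (f y) ∂μ := by
          refine lintegral_mono_ae ?_
          rw [ae_restrict_iff' hmeas]
          exact Filter.Eventually.of_forall hpt
      _ = c * ∫⁻ y in S j, ENNReal.ofReal (f y) ∂μ := lintegral_const_mul' _ _ hcne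
      _ ≤ c * ∫⁻ y in ball x (rr j), ENNReal.ofReal (f y) ∂μ := by
          exact mul_le_mul_right (lintegral_mono_set Set.diff_subset) _
      _ ≤ c * (A * μ (ball x (rr j))) := by
          refine mul_le_mul_right (ball_lintegral_le μ f x (hrpos j) ?_) _
          exact ne_top_of_le_ne_top ofReal_ne_top (hvol _ (hrpos j))
      _ ≤ c * (A * ENNReal.ofReal (κ⁻¹ * rr j ^ n)) := by
          exact mul_le_mul_right (mul_le_mul_right (hvol _ (hrpos j)) _) _
      _ = A * (c * ENNReal.ofReal (κ⁻¹ * rr j ^ n)) := by ring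
      _ = A * ENNReal.ofReal ((rr (j+1) ^ (n-1))⁻¹ * (κ⁻¹ * rr j ^ n)) := by
          rw [hc, ← ENNReal.ofReal_inv_of_pos (by positivity), ← ENNReal.ofReal_mul (by positivity)]
      _ = A * ENNReal.ofReal (κ⁻¹ * 2 ^ (n-1) * R * (2⁻¹:ℝ)^j) := by
          congr 2
          have key : ∀ r : ℝ, 0 < r → ((r/2) ^ (n-1))⁻¹ * (κ⁻¹ * r ^ n) = κ⁻¹ * 2^(n-1) * r := by
            intro r hr
            have h3 : r ^ n = r ^ (n-1) * r := by rw [← pow_succ]; congr 1; omega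
            rw [div_pow, h3]
            have h4 : r ≠ 0 := hr.ne'
            have h5 : (2:ℝ) ^ (n-1) ≠ 0 := by positivity
            field_simp
          rw [hrsucc j, key (rr j) (hrpos j)]
          simp only [hrr]
          ring
      _ = A * ENNReal.ofReal (κ⁻¹ * 2 ^ (n-1) * R) * ENNReal.ofReal ((2⁻¹:ℝ) ^ j) := by
          rw [ENNReal.ofReal_mul (by positivity), mul_assoc]
          ring
  calc ∫⁻ y in ball x R, g y ∂μ
      = ∫⁻ y in ball x R \ {x}, g y ∂μ := hcongr
    _ ≤ ∫⁻ y in ⋃ j, S j, g y ∂μ := lintegral_mono_set hsub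
    _ ≤ ∑' j, ∫⁻ y in S j, g y ∂μ := lintegral_iUnion_le _ _
    _ ≤ ∑' j, A * ENNReal.ofReal (κ⁻¹ * 2 ^ (n-1) * R) * ENNReal.ofReal ((2⁻¹:ℝ) ^ j) :=
        ENNReal.tsum_le_tsum hterm
    _ = A * ENNReal.ofReal (κ⁻¹ * 2 ^ (n-1) * R) * ∑' j, ENNReal.ofReal ((2⁻¹:ℝ) ^ j) :=
        ENNReal.tsum_mul_left
    _ = A * ENNReal.ofReal (κ⁻¹ * 2 ^ (n-1) * R) * 2 := by
        congr 1
        have : ∀ j : ℕ, ENNReal.ofReal ((2⁻¹:ℝ) ^ j) = (2⁻¹ : ℝ≥0∞) ^ j := by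
          intro j
          rw [ENNReal.ofReal_pow (by norm_num)]
          congr 1
          rw [ENNReal.ofReal_inv_of_pos (by norm_num)]
          norm_num
        simp_rw [this]
        rw [ENNReal.tsum_geometric, ENNReal.one_sub_inv_two]
        simp
    _ = A * ENNReal.ofReal (κ⁻¹ * 2 ^ n * R) := by
        rw [mul_assoc, ← ENNReal.ofReal_ofNat 2, ← ENNReal.ofReal_mul (by positivity)]
        congr 2
        have h2n : (2:ℝ) ^ n = 2 ^ (n-1) * 2 := by
          conv_lhs => rw [show n = (n-1)+1 by omega]
          rw [pow_succ]
        rw [h2n]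
        ring

section
variable {X : Type*} [MetricSpace X] [MeasurableSpace X] [BorelSpace X]
  (μ : Measure X) (n : ℕ) (f : X → ℝ) (x : X)

lemma far_part {R : ℝ} (hR : 0 < R) :
    ∫⁻ y in (ball x R)ᶜ, ENNReal.ofReal (f y) / edist x y ^ (n - 1) ∂μ ≤
      (ENNReal.ofReal (R ^ (n - 1)))⁻¹ * ∫⁻ y, ENNReal.ofReal (f y) ∂μ := by
  set c : ℝ≥0∞ := (ENNReal.ofReal (R ^ (n - 1)))⁻¹ with hc
  have hcne : c ≠ ⊤ := by
    rw [hc]; simp [ENNReal.inv_ne_top]; positivity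
  have hpt : ∀ y ∈ (ball x R)ᶜ, ENNReal.ofReal (f y) / edist x y ^ (n - 1) ≤
      c * ENNReal.ofReal (f y) := by
    intro y hy
    have hdy : R ≤ dist x y := by
      rw [Set.mem_compl_iff, mem_ball, dist_comm] at hy
      exact not_lt.mp hy
    have hpow : ENNReal.ofReal (R ^ (n-1)) ≤ edist x y ^ (n-1) := by
      rw [ENNReal.ofReal_pow hR.le]
      refine pow_le_pow_left' ?_ _
      rw [edist_dist]; exact ENNReal.ofReal_le_ofReal hdy
    rw [ENNReal.div_eq_inv_mul, hc]
    exact mul_le_mul_left (ENNReal.inv_le_inv.mpr hpow) _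
  calc ∫⁻ y in (ball x R)ᶜ, ENNReal.ofReal (f y) / edist x y ^ (n - 1) ∂μ
      ≤ ∫⁻ y in (ball x R)ᶜ, c * ENNReal.ofReal (f y) ∂μ := by
        refine lintegral_mono_ae ?_
        rw [ae_restrict_iff' measurableSet_ball.compl]
        exact Filter.Eventually.of_forall hpt
    _ = c * ∫⁻ y in (ball x R)ᶜ, ENNReal.ofReal (f y) ∂μ := lintegral_const_mul' _ _ hcne
    _ ≤ c * ∫⁻ y, ENNReal.ofReal (f y) ∂μ :=
        mul_le_mul_right (setLIntegral_le_lintegral _ _) _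
end

lemma rcalc (n : ℕ) (hn : 2 ≤ n) {a i : ℝ} (ha : 0 < a) (hi : 0 < i) :
    a * ((i/a) ^ ((1:ℝ)/n)) = a ^ (((n:ℝ)-1)/n) * i ^ ((1:ℝ)/n) ∧
    i / ((i/a) ^ ((1:ℝ)/n)) ^ (n-1) = a ^ (((n:ℝ)-1)/n) * i ^ ((1:ℝ)/n) := by
  have hn0 : (n:ℝ) ≠ 0 := by positivity
  set p : ℝ := (1:ℝ)/n with hp
  set q : ℝ := ((n:ℝ)-1)/n with hq
  have hpq : q = 1 - p := by rw [hp, hq]; field_simp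
  have hdiv : (i/a) ^ p = i ^ p / a ^ p := Real.div_rpow hi.le ha.le p
  constructor
  · rw [hdiv]
    rw [eq_comm]
    rw [hpq, Real.rpow_sub ha, Real.rpow_one]
    ring
  · have h1 : ((i/a) ^ p) ^ (n-1) = (i/a) ^ (p * (n-1:ℕ)) := by
      rw [← Real.rpow_natCast ((i/a)^p) (n-1), ← Real.rpow_mul (by positivity)]
    have h2 : p * ((n-1:ℕ):ℝ) = q := by
      rw [hp, hq]
      have : ((n-1:ℕ):ℝ) = (n:ℝ) - 1 := by
        push_cast [Nat.cast_sub (by omega : 1 ≤ n)]; ring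
      rw [this]; field_simp
    rw [h1, h2, Real.div_rpow hi.le ha.le]
    have hiq : (0:ℝ) < i ^ q := Real.rpow_pos_of_pos hi q
    have haq : (0:ℝ) < a ^ q := Real.rpow_pos_of_pos ha q
    have hmul : i ^ q * i ^ p = i := by
      rw [← Real.rpow_add hi]
      have hqp : q + p = 1 := by rw [hpq]; ring
      rw [hqp, Real.rpow_one]
    rw [div_eq_iff (ne_of_gt (div_pos hiq haq))]
    field_simp
    rw [mul_comm (i ^ p) (i ^ q), hmul]


/-- on a metric measure space whose balls satisfy the upper volume bound
`μ(B(x,r)) ≤ κ⁻¹ rⁿ`, the Riesz potential of order 1 satisfies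
`I₁ f (x) ≤ C₁ (M f (x))^{(n-1)/n} ‖f‖₁^{1/n}`, with `C₁` depending only on `n` and `κ`. -/
theorem riesz_potential_le_maximal_rpow (n : ℕ) (hn : 2 ≤ n) (κ : ℝ) (hκ : 0 < κ) :
    ∃ C₁ : ℝ, 0 < C₁ ∧
      ∀ (X : Type*) [MetricSpace X] [MeasurableSpace X] [BorelSpace X] (μ : Measure X),
        (∀ (x : X) (r : ℝ), 0 < r → μ (ball x r) ≤ ENNReal.ofReal (κ⁻¹ * r ^ n)) →
        ∀ f : X → ℝ, Integrable f μ → (∀ y, 0 ≤ f y) →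
          ∀ x : X, maximalFn μ f x < ⊤ →
            rieszPotential μ n f x ≤
              ENNReal.ofReal C₁ * maximalFn μ f x ^ (((n : ℝ) - 1) / n) *
                (∫⁻ y, ENNReal.ofReal (f y) ∂μ) ^ ((1 : ℝ) / n) := by
  refine ⟨κ⁻¹ * 2 ^ n + 1, by positivity, ?_⟩
  intro X _ _ _ μ hvol f hf hf0 x hM
  have haemeas : AEMeasurable (fun y => ENNReal.ofReal (f y)) μ :=
    ENNReal.measurable_ofReal.comp_aemeasurable hf.aemeasurable
  set A := maximalFn μ f x with hA
  set I := ∫⁻ y, ENNReal.ofReal (f y) ∂μ with hI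
  have hIne : I ≠ ⊤ :=
    ((hasFiniteIntegral_iff_ofReal (Filter.Eventually.of_forall hf0)).mp hf.2).ne
  have hzero : I = 0 → rieszPotential μ n f x ≤
      ENNReal.ofReal (κ⁻¹ * 2 ^ n + 1) * A ^ (((n : ℝ) - 1) / n) * I ^ ((1 : ℝ) / n) := by
    intro h0
    have hf0' : (fun y => ENNReal.ofReal (f y)) =ᵐ[μ] 0 :=
      (lintegral_eq_zero_iff' haemeas).mp h0
    have hg0 : (fun y => ENNReal.ofReal (f y) / edist x y ^ (n - 1)) =ᵐ[μ] 0 :=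
      hf0'.mono fun y hy => by
        simp only [Pi.zero_apply] at hy ⊢
        rw [hy, ENNReal.zero_div]
    have : rieszPotential μ n f x = 0 := by
      rw [rieszPotential, lintegral_congr_ae hg0]
      simp
    rw [this]; exact zero_le
  by_cases hI0 : I = 0
  · exact hzero hI0
  have hA0 : A ≠ 0 := by
    intro h0
    apply hI0
    have hball : ∀ r : ℝ, 0 < r → ∫⁻ y in ball x r, ENNReal.ofReal (f y) ∂μ = 0 := by
      intro r hr
      have hterm : (μ (ball x r))⁻¹ * ∫⁻ y in ball x r, ENNReal.ofReal (f y) ∂μ ≤ A :=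
        le_iSup₂ (f := fun (r : ℝ) (_ : 0 < r) =>
          (μ (ball x r))⁻¹ * ∫⁻ y in ball x r, ENNReal.ofReal (f y) ∂μ) r hr
      rw [h0, le_zero_iff] at hterm
      rcases mul_eq_zero.mp hterm with h | h
      · exact absurd (ENNReal.inv_eq_zero.mp h)
          (ne_top_of_le_ne_top ofReal_ne_top (hvol x r hr))
      · exact h
    have huniv : (Set.univ : Set X) = ⋃ k : ℕ, ball x ((k : ℝ) + 1) := by
      ext y
      simp only [Set.mem_univ, Set.mem_iUnion, mem_ball, true_iff]
      obtain ⟨k, hk⟩ := exists_nat_gt (dist y x)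
      exact ⟨k, by linarith⟩
    have hle : I ≤ 0 := by
      calc I = ∫⁻ y in Set.univ, ENNReal.ofReal (f y) ∂μ := (setLIntegral_univ _).symm
        _ = ∫⁻ y in ⋃ k : ℕ, ball x ((k : ℝ) + 1), ENNReal.ofReal (f y) ∂μ := by rw [huniv]
        _ ≤ ∑' k : ℕ, ∫⁻ y in ball x ((k : ℝ) + 1), ENNReal.ofReal (f y) ∂μ :=
            lintegral_iUnion_le _ _
        _ = 0 := by
            have : ∀ k : ℕ, ∫⁻ y in ball x ((k : ℝ) + 1), ENNReal.ofReal (f y) ∂μ = 0 :=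
              fun k => hball _ (by positivity)
            simp [this]
    exact le_antisymm hle zero_le
  have hAfin : A ≠ ⊤ := hM.ne
  set a := A.toReal with ha
  set i := I.toReal with hi
  have hapos : 0 < a := toReal_pos hA0 hAfin
  have hipos : 0 < i := toReal_pos hI0 hIne
  have hAa : A = ENNReal.ofReal a := (ofReal_toReal hAfin).symm
  have hIi : I = ENNReal.ofReal i := (ofReal_toReal hIne).symm
  set R : ℝ := (i / a) ^ ((1 : ℝ) / n) with hRdef
  have hRpos : 0 < R := Real.rpow_pos_of_pos (div_pos hipos hapos) _
  obtain ⟨hc1, hc2⟩ := rcalc n hn hapos hipos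
  set u : ℝ := a ^ (((n : ℝ) - 1) / n) * i ^ ((1 : ℝ) / n) with hu
  calc rieszPotential μ n f x
      = (∫⁻ y in ball x R, ENNReal.ofReal (f y) / edist x y ^ (n - 1) ∂μ) +
        ∫⁻ y in (ball x R)ᶜ, ENNReal.ofReal (f y) / edist x y ^ (n - 1) ∂μ := by
        rw [rieszPotential, ← lintegral_add_compl _ measurableSet_ball (μ := μ)]
    _ ≤ A * ENNReal.ofReal (κ⁻¹ * 2 ^ n * R) + (ENNReal.ofReal (R ^ (n - 1)))⁻¹ * I :=
        add_le_add (near_part μ n hn κ hκ f x (hvol x) hRpos) (far_part μ n f x hRpos)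
    _ = ENNReal.ofReal (κ⁻¹ * 2 ^ n * (a * R)) + ENNReal.ofReal (i / R ^ (n - 1)) := by
        rw [hAa, hIi, ← ENNReal.ofReal_mul hapos.le,
          ← ENNReal.ofReal_inv_of_pos (by positivity), ← ENNReal.ofReal_mul (by positivity)]
        congr 1
        · congr 1; ring
        · congr 1; rw [inv_mul_eq_div]
    _ = ENNReal.ofReal (κ⁻¹ * 2 ^ n * u) + ENNReal.ofReal u := by rw [hc1, hc2]
    _ = ENNReal.ofReal ((κ⁻¹ * 2 ^ n + 1) * u) := by
        rw [← ENNReal.ofReal_add (by positivity) (by positivity)]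
        congr 1; ring
    _ = ENNReal.ofReal (κ⁻¹ * 2 ^ n + 1) *
          (ENNReal.ofReal (a ^ (((n : ℝ) - 1) / n)) * ENNReal.ofReal (i ^ ((1 : ℝ) / n))) := by
        rw [hu, ENNReal.ofReal_mul (by positivity), ENNReal.ofReal_mul (by positivity)]
    _ = ENNReal.ofReal (κ⁻¹ * 2 ^ n + 1) * A ^ (((n : ℝ) - 1) / n) * I ^ ((1 : ℝ) / n) := by
        rw [hAa, hIi, ENNReal.ofReal_rpow_of_pos hapos, ENNReal.ofReal_rpow_of_pos hipos]
        ring
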